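/- Let f : [0,2] → ℝ² be defined by f(t) = (cos(2π⌊t⌋/3), sin(2π⌊t⌋/3)). Then the truncated variation TV(f,[0,2],√3) = 0, yet there is no sequence of functions fₙ : [0,2] → ℝ² with ‖f − fₙ‖_∞ ≤ √3/2 and TV(fₙ,[0,2],0) → 0. Hence inf_{g∈B(f,√3/2)} TV(g,[0,2],0) > TV(f,[0,2],√3). -/

import Mathlib

open Set Filter Topology ENNReal

noncomputable def truncVar {E : Type*} [PseudoMetricSpace E] (f : ℝ → E) (a b δ : ℝ) : ℝ≥0∞ :=
  ⨆ (n : ℕ) (t : Fin (n + 1) → ℝ) (_ : StrictMono t) (_ : ∀ i, t i ∈ Set.Icc a b),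
    ENNReal.ofReal (∑ i : Fin n, max (dist (f (t i.succ)) (f (t i.castSucc)) - δ) 0)

def Regulated {E : Type*} [PseudoMetricSpace E] (f : ℝ → E) (a b : ℝ) : Prop :=
  (∀ t ∈ Set.Ico a b, ∃ L, Filter.Tendsto f (nhdsWithin t (Set.Ioi t)) (nhds L)) ∧
  (∀ t ∈ Set.Ioc a b, ∃ L, Filter.Tendsto f (nhdsWithin t (Set.Iio t)) (nhds L))

noncomputable def kolesFun : ℝ → EuclideanSpace ℝ (Fin 2) := fun t =>
  WithLp.toLp 2 ![Real.cos (2 * Real.pi * (⌊t⌋ : ℝ) / 3), Real.sin (2 * Real.pi * (⌊t⌋ : ℝ) / 3)]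




open Real

lemma geom_core {E : Type*} [NormedAddCommGroup E] [InnerProductSpace ℝ E]
    (r : ℝ) (hr : 0 < r) (p0 p1 p2 x y z : E)
    (h01 : dist p0 p1 = 2*r) (h12 : dist p1 p2 = 2*r) (h02 : dist p0 p2 = 2*r)
    (hx : dist p0 x ≤ r) (hy : dist p1 y ≤ r) (hz : dist p2 z ≤ r) :
    r/8 ≤ dist x y + dist y z := by
  by_contra h
  push_neg at h
  set s := dist x y with hs
  set t := dist y z with ht
  have hs0 : 0 ≤ s := dist_nonneg
  have ht0 : 0 ≤ t := dist_nonneg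
  -- bounds on dist y p0 and dist y p2
  have hyp0 : dist y p0 ≤ s + r := by
    calc dist y p0 ≤ dist y x + dist x p0 := dist_triangle _ _ _
    _ ≤ s + r := by rw [dist_comm y x, dist_comm x p0]; linarith
  have hyp2 : dist y p2 ≤ t + r := by
    calc dist y p2 ≤ dist y z + dist z p2 := dist_triangle _ _ _
    _ ≤ t + r := by rw [dist_comm z p2]; linarith
  have hyp1 : dist y p1 ≤ r := by rw [dist_comm]; exact hy
  set A := ‖(y + y) - (p0 + p1)‖ with hA
  set B := ‖(y + y) - (p1 + p2)‖ with hB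
  have par1 := parallelogram_law_with_norm ℝ (y - p0) (y - p1)
  have e1 : (y - p0) + (y - p1) = (y + y) - (p0 + p1) := by abel
  have e2 : (y - p0) - (y - p1) = p1 - p0 := by abel
  rw [e1, e2] at par1
  have par2 := parallelogram_law_with_norm ℝ (y - p1) (y - p2)
  have e3 : (y - p1) + (y - p2) = (y + y) - (p1 + p2) := by abel
  have e4 : (y - p1) - (y - p2) = p2 - p1 := by abel
  rw [e3, e4] at par2
  have n10 : ‖p1 - p0‖ = 2*r := by rw [← dist_eq_norm, dist_comm]; exact h01
  have n21 : ‖p2 - p1‖ = 2*r := by rw [← dist_eq_norm, dist_comm]; exact h12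
  have nAB : 2*r ≤ A + B := by
    have : p0 - p2 = ((y + y) - (p1 + p2)) - ((y + y) - (p0 + p1)) := by abel
    calc 2*r = ‖p0 - p2‖ := by rw [← dist_eq_norm, h02]
    _ = ‖((y + y) - (p1 + p2)) - ((y + y) - (p0 + p1))‖ := by rw [← this]
    _ ≤ B + A := norm_sub_le _ _
    _ = A + B := by ring
  have hd0 : dist y p0 = ‖y - p0‖ := dist_eq_norm _ _
  have hd1 : dist y p1 = ‖y - p1‖ := dist_eq_norm _ _
  have hd2 : dist y p2 = ‖y - p2‖ := dist_eq_norm _ _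
  have hn0 : 0 ≤ ‖y - p0‖ := norm_nonneg _
  have hn1 : 0 ≤ ‖y - p1‖ := norm_nonneg _
  have hn2 : 0 ≤ ‖y - p2‖ := norm_nonneg _
  have hA0 : 0 ≤ A := norm_nonneg _
  have hB0 : 0 ≤ B := norm_nonneg _
  rw [hd0] at hyp0; rw [hd1] at hyp1; rw [hd2] at hyp2
  nlinarith [sq_nonneg (A - B), sq_nonneg (A + B), mul_pos hr hr, sq_nonneg (s + t),
    mul_nonneg hs0 ht0, mul_le_mul hyp0 hyp0 hn0 (by linarith : (0:ℝ) ≤ s + r),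
    mul_le_mul hyp1 hyp1 hn1 hr.le,
    mul_le_mul hyp2 hyp2 hn2 (by linarith : (0:ℝ) ≤ t + r)]


lemma koles_apply (t : ℝ) : kolesFun t 0 = Real.cos (2 * Real.pi * (⌊t⌋ : ℝ) / 3) ∧
    kolesFun t 1 = Real.sin (2 * Real.pi * (⌊t⌋ : ℝ) / 3) := ⟨rfl, rfl⟩

lemma koles_dist (x y : ℝ) : dist (kolesFun x) (kolesFun y) =
    Real.sqrt ((Real.cos (2*π*(⌊x⌋:ℝ)/3) - Real.cos (2*π*(⌊y⌋:ℝ)/3))^2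
      + (Real.sin (2*π*(⌊x⌋:ℝ)/3) - Real.sin (2*π*(⌊y⌋:ℝ)/3))^2) := by
  rw [EuclideanSpace.dist_eq, Fin.sum_univ_two]
  congr 1
  rw [(koles_apply x).1, (koles_apply x).2, (koles_apply y).1, (koles_apply y).2]
  rw [Real.dist_eq, Real.dist_eq, sq_abs, sq_abs]

lemma cos_key (k : ℤ) : (-(1/2) : ℝ) ≤ Real.cos (2*π*(k:ℝ)/3) := by
  have hk : k = 3*(k/3) + k % 3 := (Int.mul_ediv_add_emod k 3).symm
  have hr : k % 3 = 0 ∨ k % 3 = 1 ∨ k % 3 = 2 := by omega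
  have he : 2*π*(k:ℝ)/3 = 2*π*((k % 3 : ℤ):ℝ)/3 + ((k/3 : ℤ):ℝ)*(2*π) := by
    have hkr : (k:ℝ) = 3*((k/3 : ℤ):ℝ) + ((k % 3 : ℤ):ℝ) := by exact_mod_cast hk
    rw [hkr]; ring
  rw [he, Real.cos_add_int_mul_two_pi]
  rcases hr with h | h | h <;> rw [h]
  · norm_num
  · have : 2*π*((1:ℤ):ℝ)/3 = π - π/3 := by push_cast; ring
    rw [this, Real.cos_pi_sub, Real.cos_pi_div_three]
  · have : 2*π*((2:ℤ):ℝ)/3 = π/3 + π := by push_cast; ring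
    rw [this, Real.cos_add_pi, Real.cos_pi_div_three]

lemma koles_dist_le (x y : ℝ) : dist (kolesFun x) (kolesFun y) ≤ Real.sqrt 3 := by
  rw [koles_dist]
  apply Real.sqrt_le_sqrt
  set a := 2*π*(⌊x⌋:ℝ)/3
  set b := 2*π*(⌊y⌋:ℝ)/3
  have hcos : Real.cos (a - b) = Real.cos a * Real.cos b + Real.sin a * Real.sin b :=
    Real.cos_sub a b
  have hab : a - b = 2*π*((⌊x⌋ - ⌊y⌋ : ℤ):ℝ)/3 := by push_cast [a, b]; ring
  have hk := cos_key (⌊x⌋ - ⌊y⌋)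
  rw [← hab] at hk
  nlinarith [Real.sin_sq_add_cos_sq a, Real.sin_sq_add_cos_sq b]

-- explicit distances
lemma floor2 : (⌊(2:ℝ)⌋ : ℝ) = 2 := by norm_num
lemma floor1 : (⌊(1:ℝ)⌋ : ℝ) = 1 := by norm_num
lemma floor0 : (⌊(0:ℝ)⌋ : ℝ) = 0 := by norm_num

lemma cos1 : Real.cos (2*π*(1:ℝ)/3) = -(1/2) := by
  have : 2*π*(1:ℝ)/3 = π - π/3 := by ring
  rw [this, Real.cos_pi_sub, Real.cos_pi_div_three]
lemma sin1 : Real.sin (2*π*(1:ℝ)/3) = Real.sqrt 3 / 2 := by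
  have : 2*π*(1:ℝ)/3 = π - π/3 := by ring
  rw [this, Real.sin_pi_sub, Real.sin_pi_div_three]
lemma cos2 : Real.cos (2*π*(2:ℝ)/3) = -(1/2) := by
  have : 2*π*(2:ℝ)/3 = π/3 + π := by ring
  rw [this, Real.cos_add_pi, Real.cos_pi_div_three]
lemma sin2 : Real.sin (2*π*(2:ℝ)/3) = -(Real.sqrt 3 / 2) := by
  have : 2*π*(2:ℝ)/3 = π/3 + π := by ring
  rw [this, Real.sin_add_pi, Real.sin_pi_div_three]

lemma sq3 : Real.sqrt 3 ^ 2 = 3 := Real.sq_sqrt (by norm_num)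

lemma d01 : dist (kolesFun 0) (kolesFun 1) = Real.sqrt 3 := by
  rw [koles_dist, floor0, floor1]
  rw [show 2*π*(0:ℝ)/3 = 0 by ring, Real.cos_zero, Real.sin_zero, cos1, sin1]
  rw [show ((1:ℝ) - -(1/2))^2 + (0 - Real.sqrt 3/2)^2 = 9/4 + (Real.sqrt 3)^2/4 by ring, sq3]
  norm_num

lemma d12 : dist (kolesFun 1) (kolesFun 2) = Real.sqrt 3 := by
  rw [koles_dist, floor1, floor2, cos1, sin1, cos2, sin2]
  rw [show (-(1/2) - -(1/2:ℝ))^2 + (Real.sqrt 3/2 - -(Real.sqrt 3/2))^2 = (Real.sqrt 3)^2 by ring, sq3]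

lemma d02 : dist (kolesFun 0) (kolesFun 2) = Real.sqrt 3 := by
  rw [koles_dist, floor0, floor2]
  rw [show 2*π*(0:ℝ)/3 = 0 by ring, Real.cos_zero, Real.sin_zero, cos2, sin2]
  rw [show ((1:ℝ) - -(1/2))^2 + (0 - -(Real.sqrt 3/2))^2 = 9/4 + (Real.sqrt 3)^2/4 by ring, sq3]
  norm_num



lemma tv_koles_zero : truncVar kolesFun 0 2 (Real.sqrt 3) = 0 := by
  refine le_antisymm ?_ zero_le
  refine iSup_le fun n => iSup_le fun t => iSup_le fun _ => iSup_le fun _ => ?_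
  have : (∑ i : Fin n, max (dist (kolesFun (t i.succ)) (kolesFun (t i.castSucc)) - Real.sqrt 3) 0) = 0 :=
    Finset.sum_eq_zero fun i _ => max_eq_right (by linarith [koles_dist_le (t i.succ) (t i.castSucc)])
  rw [this, ENNReal.ofReal_zero]

lemma strictMono012 : StrictMono (![0,1,2] : Fin 3 → ℝ) := by
  intro i j hij
  fin_cases i <;> fin_cases j <;> simp_all

lemma mem012 : ∀ i, (![0,1,2] : Fin 3 → ℝ) i ∈ Set.Icc (0:ℝ) 2 := by
  intro i; fin_cases i <;> norm_num

lemma tv_lower (g : ℝ → EuclideanSpace ℝ (Fin 2))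
    (hg : ∀ t ∈ Set.Icc (0 : ℝ) 2, dist (kolesFun t) (g t) ≤ Real.sqrt 3 / 2) :
    ENNReal.ofReal (Real.sqrt 3 / 16) ≤ truncVar g 0 2 0 := by
  have hr : (0:ℝ) < Real.sqrt 3 / 2 := by positivity
  have key : Real.sqrt 3 / 2 / 8 ≤ dist (g 0) (g 1) + dist (g 1) (g 2) := by
    apply geom_core (Real.sqrt 3 / 2) hr (kolesFun 0) (kolesFun 1) (kolesFun 2)
      (g 0) (g 1) (g 2)
    · rw [d01]; ring
    · rw [d12]; ring
    · rw [d02]; ring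
    · exact hg 0 (by norm_num)
    · exact hg 1 (by norm_num)
    · exact hg 2 (by norm_num)
  unfold truncVar
  refine le_iSup_of_le 2 (le_iSup_of_le (![0,1,2] : Fin 3 → ℝ)
    (le_iSup_of_le strictMono012 (le_iSup_of_le mem012 ?_)))
  apply ENNReal.ofReal_le_ofReal
  rw [Fin.sum_univ_two]
  have e0 : (![0,1,2] : Fin 3 → ℝ) ((0 : Fin 2).castSucc) = 0 := rfl
  have e1 : (![0,1,2] : Fin 3 → ℝ) ((0 : Fin 2).succ) = 1 := rfl
  have e1' : (![0,1,2] : Fin 3 → ℝ) ((1 : Fin 2).castSucc) = 1 := rfl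
  have e2 : (![0,1,2] : Fin 3 → ℝ) ((1 : Fin 2).succ) = 2 := rfl
  rw [e0, e1, e1', e2, sub_zero, sub_zero,
    max_eq_left dist_nonneg, max_eq_left dist_nonneg,
    dist_comm (g 1) (g 0), dist_comm (g 2) (g 1)]
  linarith


theorem stmt_3 :
    truncVar kolesFun 0 2 (Real.sqrt 3) = 0 ∧
    ¬ (∃ F : ℕ → ℝ → EuclideanSpace ℝ (Fin 2),
        (∀ n, ∀ t ∈ Set.Icc (0 : ℝ) 2, dist (kolesFun t) (F n t) ≤ Real.sqrt 3 / 2) ∧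
        Filter.Tendsto (fun n => truncVar (F n) 0 2 0) Filter.atTop (nhds 0)) ∧
    truncVar kolesFun 0 2 (Real.sqrt 3) <
      ⨅ (g : ℝ → EuclideanSpace ℝ (Fin 2))
        (_ : ∀ t ∈ Set.Icc (0 : ℝ) 2, dist (kolesFun t) (g t) ≤ Real.sqrt 3 / 2),
        truncVar g 0 2 0 := by
  have hK : (0 : ℝ≥0∞) < ENNReal.ofReal (Real.sqrt 3 / 16) :=
    ENNReal.ofReal_pos.mpr (by positivity)
  refine ⟨tv_koles_zero, ?_, ?_⟩
  · rintro ⟨F, hb, hlim⟩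
    have hev : ∀ᶠ n in atTop, truncVar (F n) 0 2 0 < ENNReal.ofReal (Real.sqrt 3 / 16) :=
      hlim.eventually (Iio_mem_nhds hK)
    obtain ⟨n, hn⟩ := hev.exists
    exact absurd (tv_lower (F n) (hb n)) (not_le.mpr hn)
  · rw [tv_koles_zero]
    exact lt_of_lt_of_le hK (le_iInf fun g => le_iInf fun hg => tv_lower g hg)
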